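/- For the compressible Euler entropy S(u) = -ρs/(γ-1) with s = log(p/ρ^γ), the map from entropy variables back to conservative variables inverts the map from conservative to entropy variables: given ρ > 0, p > 0, velocities u_i, the entropy variables v₁ = (ρe(γ+1-s) - E)/(ρe), v_{1+i} = ρu_i/(ρe), v_{d+2} = -ρ/(ρe) with ρe = p/(γ-1), E = ρe + ρ|u|²/2, satisfy the inverse formulas ρ = -(ρe)v_{d+2}, ρu_i = (ρe)v_{1+i}, E = (ρe)(1 - (Σ_j v_{1+j}²)/(2v_{d+2})), where ρe is recovered as ((γ-1)/(-v_{d+2})^γ)^{1/(γ-1)} e^{-s/(γ-1)} and s = γ - v₁ + (Σ_j v_{1+j}²)/(2v_{d+2}). -/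

import Mathlib

open Real

/-- For the compressible Euler entropy `S(u) = -ρs/(γ-1)` with
`s = log(p/ρ^γ)`, the map from entropy variables back to conservative variables inverts
the map from conservative to entropy variables. -/
theorem euler_entropy_variable_inversion
    (d : ℕ) (γ : ℝ) (hγ : 1 < γ)
    (ρ : ℝ) (hρ : 0 < ρ) (p : ℝ) (hp : 0 < p) (u : Fin d → ℝ) :
    let ρe : ℝ := p / (γ - 1)
    let E : ℝ := ρe + ρ * (∑ j, u j ^ 2) / 2
    let s : ℝ := Real.log (p / ρ ^ γ)
    let v₁ : ℝ := (ρe * (γ + 1 - s) - E) / ρe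
    let vu : Fin d → ℝ := fun i => ρ * u i / ρe
    let vd2 : ℝ := -ρ / ρe
    let s' : ℝ := γ - v₁ + (∑ j, vu j ^ 2) / (2 * vd2)
    let ρe' : ℝ := ((γ - 1) / (-vd2) ^ γ) ^ (1 / (γ - 1)) * Real.exp (-s' / (γ - 1))
    ρ = -ρe' * vd2 ∧
    (∀ i, ρ * u i = ρe' * vu i) ∧
    E = ρe' * (1 - (∑ j, vu j ^ 2) / (2 * vd2)) := by
  intro ρe E s v₁ vu vd2 s' ρe'
  have hγ1 : (0:ℝ) < γ - 1 := by linarith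
  have hρe : 0 < ρe := div_pos hp hγ1
  have hρene : ρe ≠ 0 := hρe.ne'
  have hsum : (∑ j, vu j ^ 2) = ρ ^ 2 * (∑ j, u j ^ 2) / ρe ^ 2 := by
    simp only [vu, div_pow, mul_pow, ← Finset.sum_div, ← Finset.mul_sum]
  have hs' : s' = s := by
    simp only [s', v₁, vd2, E, hsum]
    field_simp
    ring
  have hneg : -vd2 = ρ / ρe := by simp [vd2, neg_div]
  have hbase : (γ - 1) / (ρ / ρe) ^ γ * (ρ ^ γ / p) = ρe ^ (γ - 1) := by
    rw [Real.div_rpow hρ.le hρe.le, Real.rpow_sub hρe, Real.rpow_one]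
    have hργ : (0:ℝ) < ρ ^ γ := Real.rpow_pos_of_pos hρ γ
    have hρeγ : (0:ℝ) < ρe ^ γ := Real.rpow_pos_of_pos hρe γ
    have hpe : (γ - 1) * ρe = p := by show (γ - 1) * (p / (γ - 1)) = p; field_simp
    clear_value ρe' s' vd2 vu v₁ s E ρe
    field_simp
    linear_combination hpe
  have hρe' : ρe' = ρe := by
    have hx : (0:ℝ) < p / ρ ^ γ := div_pos hp (Real.rpow_pos_of_pos hρ γ)
    have hexp : Real.exp (-s' / (γ - 1)) = (p / ρ ^ γ) ^ (-(1 / (γ - 1))) := by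
      rw [hs', Real.rpow_def_of_pos hx]
      congr 1
      simp [s]
      ring
    have hinv : (p / ρ ^ γ) ^ (-(1 / (γ - 1))) = (ρ ^ γ / p) ^ (1 / (γ - 1)) := by
      rw [Real.rpow_neg hx.le, ← Real.inv_rpow hx.le, inv_div]
    have hA : (0:ℝ) ≤ (γ - 1) / (ρ / ρe) ^ γ := by positivity
    calc ρe' = ((γ - 1) / (ρ / ρe) ^ γ) ^ (1 / (γ - 1)) * (ρ ^ γ / p) ^ (1 / (γ - 1)) := by
          rw [show ρe' = ((γ - 1) / (-vd2) ^ γ) ^ (1 / (γ - 1)) * Real.exp (-s' / (γ - 1)) from rfl,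
            hneg, hexp, hinv]
      _ = ((γ - 1) / (ρ / ρe) ^ γ * (ρ ^ γ / p)) ^ (1 / (γ - 1)) := by
          rw [← Real.mul_rpow hA (by positivity)]
      _ = ρe := by
          rw [hbase, ← Real.rpow_mul hρe.le, mul_one_div, div_self hγ1.ne', Real.rpow_one]
  refine ⟨?_, ?_, ?_⟩
  · rw [hρe']
    simp only [vd2]
    field_simp
  · intro i
    rw [hρe']
    simp only [vu]
    field_simp
  · rw [hρe', hsum]
    simp only [vd2, E]
    field_simp
    ring
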